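/- The system (@) is integrable: if Φ : ℂ^k → ℂ^k is a holomorphic solution of (@), then for all h, j ∈ {1,…,k−1} one has (−1)^{h+j} ∂²Φ/(∂s_j ∂s_h) = ∂²(A(s)^{2k−h−j} Φ)/∂s_k²; in particular the mixed second derivative ∂²Φ/(∂s_j ∂s_h) computed via (@) depends only on h + j and is symmetric in (h, j). -/

import Mathlib

set_option synthInstance.maxHeartbeats 1000000
set_option maxHeartbeats 1000000

open Matrix Complex

noncomputable section

/-- The companion matrix `A(s)` of `P_s(z) = Σ_{h=0}^{k} (−1)^h s_h z^{k−h}` (with `s_0 = 1`):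
`A(s)_{i,i+1} = 1` for `1 ≤ i ≤ k−1`, the last row is `((−1)^{k−1} s_k, …, s_1)`
(here `0`-indexed: `s i` is `s_{i+1}`). -/
def LcompA (k : ℕ) (s : Fin k → ℂ) : Matrix (Fin k) (Fin k) ℂ := fun i j =>
  if (i : ℕ) = k - 1 then
    (-1 : ℂ) ^ (k - 1 - (j : ℕ)) * s ⟨k - 1 - (j : ℕ), by have := j.isLt; omega⟩
  else if (j : ℕ) = (i : ℕ) + 1 then 1 else 0

/-- The system (@) at a point `s`: `(−1)^{k+h} ∂Φ/∂s_h = ∂(A(s)^{k−h} Φ)/∂s_k`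
for every `h ∈ {1, …, k−1}`. -/
def SatA (k : ℕ) (Φ : (Fin k → ℂ) → Fin k → ℂ) (s : Fin k → ℂ) : Prop :=
  ∀ h : ℕ, ∀ _h1 : 1 ≤ h, ∀ _h2 : h ≤ k - 1,
    ((-1 : ℂ) ^ (k + h)) •
        fderiv ℂ Φ s (Pi.single (⟨h - 1, by omega⟩ : Fin k) (1 : ℂ))
      = fderiv ℂ (fun t => (LcompA k t ^ (k - h)) *ᵥ Φ t) s
          (Pi.single (⟨k - 1, by omega⟩ : Fin k) (1 : ℂ))

namespace SysInt

open intervalIntegral Metric Real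
open scoped NNReal


variable {k : ℕ}

lemma slice_diff (f : (Fin k → ℂ) → (Fin k → ℂ)) (hf : Differentiable ℂ f) (x v : Fin k → ℂ) :
    Differentiable ℂ (fun z : ℂ => f (x + z • v)) :=
  hf.comp ((differentiable_id.smul_const v).const_add x)

lemma fderiv_apply_eq_deriv_slice {f : (Fin k → ℂ) → (Fin k → ℂ)} (hf : Differentiable ℂ f)
    (x v : Fin k → ℂ) :
    fderiv ℂ f x v = deriv (fun z : ℂ => f (x + z • v)) 0 := by
  have h1 : HasDerivAt (fun z : ℂ => x + z • v) v 0 := by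
    simpa using ((hasDerivAt_id (0 : ℂ)).smul_const v).const_add x
  have h2 := (hf (x + (0 : ℂ) • v)).hasFDerivAt.comp_hasDerivAt 0 h1
  have hx : x + (0 : ℂ) • v = x := by simp
  rw [hx] at h2
  exact h2.deriv.symm

lemma deriv_eq_coeff (g : ℂ → (Fin k → ℂ)) (hg : Differentiable ℂ g) {R : ℝ≥0} (hR : 0 < R) :
    deriv g 0 = cauchyPowerSeries g 0 R 1 fun _ => 1 :=
  (hg.hasFPowerSeriesOnBall 0 hR).hasFPowerSeriesAt.deriv

lemma fderiv_norm_le {f : (Fin k → ℂ) → (Fin k → ℂ)} (hf : Differentiable ℂ f) (x₀ : Fin k → ℂ)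
    (r : ℝ) : ∃ M : ℝ, 0 ≤ M ∧ ∀ y ∈ ball x₀ r, ‖fderiv ℂ f y‖ ≤ M := by
  obtain ⟨M₀, hM₀⟩ := (isCompact_closedBall x₀ (|r| + 1)).exists_bound_of_continuousOn
    hf.continuous.continuousOn
  refine ⟨max M₀ 0, le_max_right _ _, fun y hy => ?_⟩
  refine ContinuousLinearMap.opNorm_le_bound _ (le_max_right _ _) fun v => ?_
  rcases eq_or_ne v 0 with rfl | hv
  · simp
  · have hvpos : 0 < ‖v‖ := norm_pos_iff.2 hv
    set R : ℝ := ‖v‖⁻¹ with hRdef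
    have hRpos : 0 < R := inv_pos.2 hvpos
    set g : ℂ → (Fin k → ℂ) := fun z => f (y + z • v) with hgdef
    have hg : Differentiable ℂ g := slice_diff f hf y v
    have hcoeff : fderiv ℂ f y v = cauchyPowerSeries g 0 R 1 fun _ => 1 := by
      rw [fderiv_apply_eq_deriv_slice hf y v]
      exact deriv_eq_coeff g hg (R := ⟨R, hRpos.le⟩) (by exact_mod_cast hRpos)
    have hbd : ∀ θ : ℝ, ‖g (circleMap 0 R θ)‖ ≤ max M₀ 0 := by
      intro θ
      have hmem : y + circleMap 0 R θ • v ∈ closedBall x₀ (|r| + 1) := by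
        rw [mem_closedBall]
        have h1 : dist (y + circleMap 0 R θ • v) y ≤ 1 := by
          rw [dist_eq_norm]
          simp only [add_sub_cancel_left]
          rw [norm_smul]
          have : ‖circleMap 0 R θ‖ = R := by
            simpa [abs_of_pos hRpos] using abs_circleMap_zero R θ
          rw [this, hRdef]
          rw [inv_mul_cancel₀ hvpos.ne']
        have h2 : dist y x₀ ≤ |r| := by
          have := mem_ball.1 hy
          have : dist y x₀ < r := this
          have hr : r ≤ |r| := le_abs_self r
          linarith
        calc dist (y + circleMap 0 R θ • v) x₀
            ≤ dist (y + circleMap 0 R θ • v) y + dist y x₀ := dist_triangle _ _ _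
          _ ≤ 1 + |r| := add_le_add h1 h2
          _ = |r| + 1 := by ring
      exact le_max_of_le_left (hM₀ _ hmem)
    have hInt1 : IntervalIntegrable (fun θ => ‖g (circleMap 0 R θ)‖) MeasureTheory.volume 0 (2 * π) :=
      (Continuous.norm (hg.continuous.comp (continuous_circleMap 0 R))).intervalIntegrable _ _
    have hIle : (∫ θ in (0:ℝ)..2 * π, ‖g (circleMap 0 R θ)‖) ≤ 2 * π * max M₀ 0 := by
      calc (∫ θ in (0:ℝ)..2 * π, ‖g (circleMap 0 R θ)‖)
          ≤ ∫ _θ in (0:ℝ)..2 * π, max M₀ 0 :=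
            intervalIntegral.integral_mono_on Real.two_pi_pos.le hInt1
              (intervalIntegrable_const) (fun θ _ => hbd θ)
        _ = 2 * π * max M₀ 0 := by simp [smul_eq_mul]
    have hle1 : ‖cauchyPowerSeries g 0 R 1 fun _ => 1‖ ≤ ‖cauchyPowerSeries g 0 R 1‖ := by
      have := (cauchyPowerSeries g 0 R 1).le_opNorm fun _ => (1 : ℂ)
      simpa using this
    have hle2 := norm_cauchyPowerSeries_le g 0 R 1
    rw [hcoeff]
    have hRabs : |R|⁻¹ = ‖v‖ := by
      rw [abs_of_pos hRpos, hRdef, inv_inv]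
    calc ‖cauchyPowerSeries g 0 R 1 fun _ => 1‖
        ≤ ((2 * π)⁻¹ * ∫ θ in (0:ℝ)..2 * π, ‖g (circleMap 0 R θ)‖) * |R|⁻¹ ^ 1 :=
          hle1.trans hle2
      _ ≤ ((2 * π)⁻¹ * (2 * π * max M₀ 0)) * ‖v‖ := by
          rw [pow_one, hRabs]
          have h2pi : (0:ℝ) < (2 * π)⁻¹ := inv_pos.2 Real.two_pi_pos
          have : (2 * π)⁻¹ * (∫ θ in (0:ℝ)..2 * π, ‖g (circleMap 0 R θ)‖)
              ≤ (2 * π)⁻¹ * (2 * π * max M₀ 0) := by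
            exact mul_le_mul_of_nonneg_left hIle h2pi.le
          exact mul_le_mul_of_nonneg_right this (norm_nonneg v)
      _ = max M₀ 0 * ‖v‖ := by
          rw [inv_mul_cancel_left₀ Real.two_pi_pos.ne']

lemma deriv_eq_cauchy (g : ℂ → (Fin k → ℂ)) (hg : Differentiable ℂ g) :
    deriv g 0 = (2 * Real.pi * I : ℂ)⁻¹ •
      ∮ z in C(0, (1:ℝ)), (1 / (z - 0)) ^ (1:ℕ) • (z - 0)⁻¹ • g z := by
  rw [deriv_eq_coeff g hg (R := 1) one_pos]
  have := cauchyPowerSeries_apply g 0 ((1 : ℝ≥0) : ℝ) 1 1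
  simpa using this

/-- Cauchy-integral representation of the directional derivative of an entire function,
as an interval integral with parameter. -/
lemma fderiv_apply_repr {f : (Fin k → ℂ) → (Fin k → ℂ)} (hf : Differentiable ℂ f)
    (v x : Fin k → ℂ) :
    fderiv ℂ f x v = (2 * Real.pi * I : ℂ)⁻¹ •
      ∫ θ in (0:ℝ)..2 * π,
        (deriv (circleMap 0 1) θ * ((circleMap 0 1 θ)⁻¹ * (circleMap 0 1 θ)⁻¹)) •
          f (x + circleMap 0 1 θ • v) := by
  rw [fderiv_apply_eq_deriv_slice hf x v, deriv_eq_cauchy _ (slice_diff f hf x v)]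
  congr 1
  rw [circleIntegral]
  apply intervalIntegral.integral_congr
  intro θ _
  simp only [sub_zero, one_div, pow_one, smul_smul]

lemma diff_fderiv_apply {f : (Fin k → ℂ) → (Fin k → ℂ)} (hf : Differentiable ℂ f)
    (v : Fin k → ℂ) :
    Differentiable ℂ (fun x => fderiv ℂ f x v) := by
  intro x₀
  obtain ⟨M, hM0, hM⟩ := fderiv_norm_le hf x₀ (1 + ‖v‖ + 1)
  set c : ℝ → ℂ := fun θ =>
    deriv (circleMap 0 1) θ * ((circleMap 0 1 θ)⁻¹ * (circleMap 0 1 θ)⁻¹) with hc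
  have hcirc_ne : ∀ θ : ℝ, circleMap 0 1 θ ≠ 0 := by
    intro θ
    simpa using circleMap_ne_center (R := (1:ℝ)) (c := (0:ℂ)) one_ne_zero (θ := θ)
  have hc_cont : Continuous c := by
    rw [hc]
    simp only [deriv_circleMap]
    exact ((continuous_circleMap 0 1).mul continuous_const).mul
      (((continuous_circleMap 0 1).inv₀ hcirc_ne).mul
        ((continuous_circleMap 0 1).inv₀ hcirc_ne))
  have hc_norm : ∀ θ : ℝ, ‖c θ‖ ≤ 1 := by
    intro θ
    rw [hc]
    simp only [deriv_circleMap]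
    have h1 : ‖circleMap 0 1 θ‖ = 1 := by
      simpa using abs_circleMap_zero 1 θ
    simp [norm_mul, norm_inv, h1]
  set F : (Fin k → ℂ) → ℝ → (Fin k → ℂ) := fun x θ => c θ • f (x + circleMap 0 1 θ • v) with hF
  set F' : (Fin k → ℂ) → ℝ → ((Fin k → ℂ) →L[ℂ] (Fin k → ℂ)) := fun x θ =>
    c θ • fderiv ℂ f (x + circleMap 0 1 θ • v) with hF'
  have hinner_cont : ∀ x : Fin k → ℂ, Continuous fun θ : ℝ => x + circleMap 0 1 θ • v :=
    fun x => continuous_const.add ((continuous_circleMap 0 1).smul continuous_const)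
  have hFx_cont : ∀ x, Continuous (F x) := by
    intro x
    exact hc_cont.smul (hf.continuous.comp (hinner_cont x))
  have key : HasFDerivAt (fun x => ∫ θ in (0:ℝ)..2 * π, F x θ)
      (∫ θ in (0:ℝ)..2 * π, F' x₀ θ) x₀ := by
    apply intervalIntegral.hasFDerivAt_integral_of_dominated_of_fderiv_le
      (bound := fun _ : ℝ => M) (s := ball x₀ 1) (ball_mem_nhds x₀ one_pos)
    · exact Filter.Eventually.of_forall fun x => (hFx_cont x).aestronglyMeasurable
    · exact (hFx_cont x₀).intervalIntegrable _ _
    · have hmeas : Measurable fun θ : ℝ => fderiv ℂ f (x₀ + circleMap 0 1 θ • v) :=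
        (measurable_fderiv ℂ f).comp (hinner_cont x₀).measurable
      exact (hc_cont.stronglyMeasurable.smul hmeas.stronglyMeasurable).aestronglyMeasurable
    · apply Filter.Eventually.of_forall
      intro θ _ x hx
      have hmem : x + circleMap 0 1 θ • v ∈ ball x₀ (1 + ‖v‖ + 1) := by
        rw [mem_ball, dist_eq_norm]
        have : x + circleMap 0 1 θ • v - x₀ = (x - x₀) + circleMap 0 1 θ • v := by ring_nf
        rw [this]
        have h1 : ‖x - x₀‖ < 1 := mem_ball_iff_norm.1 hx
        have h2 : ‖circleMap 0 1 θ • v‖ ≤ ‖v‖ := by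
          rw [norm_smul]
          have : ‖circleMap 0 1 θ‖ = 1 := by simpa using abs_circleMap_zero 1 θ
          simp [this]
        calc ‖x - x₀ + circleMap 0 1 θ • v‖ ≤ ‖x - x₀‖ + ‖circleMap 0 1 θ • v‖ :=
              norm_add_le _ _
          _ < 1 + ‖v‖ + 1 := by linarith
      show ‖c θ • fderiv ℂ f (x + circleMap 0 1 θ • v)‖ ≤ M
      refine (norm_smul_le (c θ) (fderiv ℂ f (x + circleMap 0 1 θ • v))).trans ?_
      calc ‖c θ‖ * ‖fderiv ℂ f (x + circleMap 0 1 θ • v)‖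
          ≤ 1 * M := mul_le_mul (hc_norm θ) (hM _ hmem) (norm_nonneg _) zero_le_one
        _ = M := one_mul M
    · exact intervalIntegrable_const
    · apply Filter.Eventually.of_forall
      intro θ _ x _
      have hin := (hasFDerivAt_id (𝕜 := ℂ) x).add_const (circleMap 0 1 θ • v)
      have hcomp := (hf (x + circleMap 0 1 θ • v)).hasFDerivAt.comp x hin
      rw [ContinuousLinearMap.comp_id] at hcomp
      exact hcomp.const_smul (c θ)
  have hrep : (fun x => fderiv ℂ f x v) =
      fun x => (2 * Real.pi * I : ℂ)⁻¹ • ∫ θ in (0:ℝ)..2 * π, F x θ :=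
    funext fun x => fderiv_apply_repr hf v x
  rw [hrep]
  exact (key.differentiableAt).fun_const_smul _

lemma pi_decomp (w : Fin k → ℂ) : ∑ i : Fin k, w i • (Pi.single i (1 : ℂ) : Fin k → ℂ) = w := by
  funext l
  rw [Finset.sum_apply]
  rw [Finset.sum_eq_single l]
  · simp
  · intro b _ hb
    simp [Pi.single_apply, Ne.symm hb]
  · intro hl
    exact absurd (Finset.mem_univ _) hl

lemma differentiable_fderiv {f : (Fin k → ℂ) → (Fin k → ℂ)} (hf : Differentiable ℂ f) :
    Differentiable ℂ (fderiv ℂ f) := by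
  have hrep : fderiv ℂ f = fun x => ∑ i : Fin k,
      (ContinuousLinearMap.proj (R := ℂ) (φ := fun _ : Fin k => ℂ) i).smulRight
        (fderiv ℂ f x (Pi.single i (1 : ℂ))) := by
    funext x
    refine ContinuousLinearMap.ext fun w => ?_
    rw [ContinuousLinearMap.sum_apply]
    simp only [ContinuousLinearMap.smulRight_apply, ContinuousLinearMap.proj_apply]
    calc (fderiv ℂ f x) w = fderiv ℂ f x (∑ i : Fin k, w i • (Pi.single i (1 : ℂ) : Fin k → ℂ)) := by
          rw [pi_decomp]
      _ = ∑ i : Fin k, fderiv ℂ f x (w i • (Pi.single i (1 : ℂ) : Fin k → ℂ)) := map_sum _ _ _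
      _ = ∑ i : Fin k, w i • fderiv ℂ f x (Pi.single i (1 : ℂ) : Fin k → ℂ) := by
          refine Finset.sum_congr rfl fun i _ => ?_
          rw [(fderiv ℂ f x).map_smul]
  rw [hrep]
  apply Differentiable.fun_sum
  intro i _
  exact ((ContinuousLinearMap.smulRightL ℂ (Fin k → ℂ) (Fin k → ℂ)
    (ContinuousLinearMap.proj i)).differentiable).comp (diff_fderiv_apply hf _)

lemma second_symm {f : (Fin k → ℂ) → (Fin k → ℂ)} (hf : Differentiable ℂ f)
    (s v w : Fin k → ℂ) :
    fderiv ℂ (fun t => fderiv ℂ f t v) s w = fderiv ℂ (fun t => fderiv ℂ f t w) s v := by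
  have hd2 := differentiable_fderiv hf
  have key : ∀ u : Fin k → ℂ, fderiv ℂ (fun t => fderiv ℂ f t u) s
      = (fderiv ℂ (fderiv ℂ f) s).flip u := by
    intro u
    have h1 := (hd2 s).hasFDerivAt.clm_apply (hasFDerivAt_const u s)
    rw [h1.fderiv]
    simp
  rw [key v, key w, ContinuousLinearMap.flip_apply, ContinuousLinearMap.flip_apply]
  exact second_derivative_symmetric (fun y => (hf y).hasFDerivAt) (hd2 s).hasFDerivAt w v


lemma neg_one_pow_eq (a b : ℕ) (hab : a % 2 = b % 2) : (-1 : ℂ) ^ a = (-1) ^ b := by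
  conv_lhs => rw [← Nat.div_add_mod a 2]
  conv_rhs => rw [← Nat.div_add_mod b 2]
  rw [hab, pow_add, pow_add, pow_mul, pow_mul]
  norm_num

variable {k : ℕ}

/-- Matrix-to-CLM map. -/
def tc (M : Matrix (Fin k) (Fin k) ℂ) : (Fin k → ℂ) →L[ℂ] (Fin k → ℂ) :=
  LinearMap.toContinuousLinearMap (Matrix.mulVecLin M)

@[simp] lemma tc_apply (M : Matrix (Fin k) (Fin k) ℂ) (v : Fin k → ℂ) : tc M v = M *ᵥ v := rfl

lemma tc_add (M N : Matrix (Fin k) (Fin k) ℂ) : tc (M + N) = tc M + tc N := by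
  ext v i; simp [Matrix.add_mulVec]

lemma tc_smul (c : ℂ) (M : Matrix (Fin k) (Fin k) ℂ) : tc (c • M) = c • tc M := by
  ext v i; simp [Matrix.smul_mulVec]

lemma tc_mul (M N : Matrix (Fin k) (Fin k) ℂ) : tc (M * N) = tc M * tc N := by
  ext v i
  simp [ContinuousLinearMap.mul_apply, Matrix.mulVec_mulVec]

lemma tc_one : tc (1 : Matrix (Fin k) (Fin k) ℂ) = 1 := by
  ext v i; simp [Matrix.one_mulVec]

lemma tc_pow (M : Matrix (Fin k) (Fin k) ℂ) (m : ℕ) : tc (M ^ m) = tc M ^ m := by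
  induction m with
  | zero => simpa using tc_one
  | succ m ih => rw [pow_succ, pow_succ, tc_mul, ih]

/-- The linear part of `LcompA` as a matrix-valued function. -/
def Ematrix (k : ℕ) (w : Fin k → ℂ) : Matrix (Fin k) (Fin k) ℂ := fun i l =>
  if (i : ℕ) = k - 1 then
    (-1 : ℂ) ^ (k - 1 - (l : ℕ)) * w ⟨k - 1 - (l : ℕ), by have := l.isLt; omega⟩
  else 0

/-- The constant part of `LcompA`. -/
def Cmat (k : ℕ) : Matrix (Fin k) (Fin k) ℂ := fun i l =>
  if (i : ℕ) = k - 1 then 0 else if (l : ℕ) = (i : ℕ) + 1 then 1 else 0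

lemma LcompA_decomp (u : Fin k → ℂ) : LcompA k u = Cmat k + Ematrix k u := by
  ext i l
  simp only [LcompA, Cmat, Ematrix, Matrix.add_apply]
  by_cases hi : (i : ℕ) = k - 1 <;> simp [hi]

/-- `Ematrix` bundled as a continuous linear map into CLMs. -/
def AhatL (k : ℕ) : (Fin k → ℂ) →L[ℂ] ((Fin k → ℂ) →L[ℂ] (Fin k → ℂ)) :=
  LinearMap.toContinuousLinearMap
    { toFun := fun w => tc (Ematrix k w)
      map_add' := by
        intro w₁ w₂
        show tc (Ematrix k (w₁ + w₂)) = tc (Ematrix k w₁) + tc (Ematrix k w₂)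
        rw [show Ematrix k (w₁ + w₂) = Ematrix k w₁ + Ematrix k w₂ by
          ext i l
          simp only [Ematrix, Matrix.add_apply]
          by_cases hi : (i : ℕ) = k - 1 <;> simp [hi, mul_add]]
        exact tc_add _ _
      map_smul' := by
        intro c w
        show tc (Ematrix k (c • w)) = c • tc (Ematrix k w)
        rw [show Ematrix k (c • w) = c • Ematrix k w by
          ext i l
          simp only [Ematrix, Matrix.smul_apply, smul_eq_mul]
          by_cases hi : (i : ℕ) = k - 1 <;> simp [hi] <;> ring]
        exact tc_smul _ _ }

@[simp] lemma AhatL_apply (w : Fin k → ℂ) : AhatL k w = tc (Ematrix k w) := rfl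

lemma hasFDerivAt_Ahat (t : Fin k → ℂ) :
    HasFDerivAt (fun u => tc (LcompA k u)) (AhatL k) t := by
  have he : (fun u => tc (LcompA k u)) = fun u => tc (Cmat k) + AhatL k u := by
    funext u
    rw [LcompA_decomp, tc_add, AhatL_apply]
  rw [he]
  exact (AhatL k).hasFDerivAt.const_add _

/-- derivative of the `m`-th power of `tc (LcompA k ·)`. -/
def Dpow (t : Fin k → ℂ) : ℕ → ((Fin k → ℂ) →L[ℂ] ((Fin k → ℂ) →L[ℂ] (Fin k → ℂ)))
  | 0 => 0
  | (m + 1) =>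
      ((ContinuousLinearMap.compL ℂ (Fin k → ℂ) (Fin k → ℂ) (Fin k → ℂ)).flip
          (tc (LcompA k t))).comp (Dpow t m) +
      (ContinuousLinearMap.compL ℂ (Fin k → ℂ) (Fin k → ℂ) (Fin k → ℂ)
          ((tc (LcompA k t)) ^ m)).comp (AhatL k)

lemma Dpow_succ_apply (t : Fin k → ℂ) (m : ℕ) (w : Fin k → ℂ) :
    Dpow t (m + 1) w = Dpow t m w * tc (LcompA k t) + (tc (LcompA k t)) ^ m * AhatL k w := rfl

lemma hasFDerivAt_pow (t : Fin k → ℂ) (m : ℕ) :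
    HasFDerivAt (fun u => (tc (LcompA k u)) ^ m) (Dpow t m) t := by
  induction m with
  | zero => simpa [Dpow] using hasFDerivAt_const (1 : (Fin k → ℂ) →L[ℂ] (Fin k → ℂ)) t
  | succ m ih =>
      have h := ih.fun_mul' (hasFDerivAt_Ahat t)
      have he : (fun u => (tc (LcompA k u)) ^ (m + 1)) =
          fun u => (tc (LcompA k u)) ^ m * tc (LcompA k u) := by
        funext u; rw [pow_succ]
      rw [he]
      refine h.congr_fderiv ?_
      ext w : 1
      simp only [Dpow_succ_apply, ContinuousLinearMap.add_apply, ContinuousLinearMap.smul_apply,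
        ContinuousLinearMap.smulRight_apply, smul_eq_mul, MulOpposite.smul_eq_mul_unop,
        MulOpposite.unop_op]
      exact add_comm _ _


-- continuing namespace SysInt, variable k
lemma row0 (u : Fin k → ℂ) (hk : 1 ≤ k) :
    ∀ p : ℕ, p ≤ k - 1 → ∀ l : Fin k,
      (LcompA k u ^ p) ⟨0, by omega⟩ l = if (l : ℕ) = p then 1 else 0 := by
  intro p
  induction p with
  | zero =>
      intro _ l
      rw [pow_zero, Matrix.one_apply]
      by_cases hl : (l : ℕ) = 0
      · rw [if_pos, if_pos hl]
        exact Fin.ext hl.symm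
      · rw [if_neg, if_neg hl]
        intro hc
        exact hl (by rw [← hc])
  | succ p ih =>
      intro hp l
      have hp' : p < k - 1 := by omega
      rw [pow_succ, Matrix.mul_apply]
      rw [Finset.sum_eq_single (⟨p, by omega⟩ : Fin k)]
      · rw [ih (by omega) ⟨p, by omega⟩, if_pos rfl, one_mul]
        show LcompA k u ⟨p, _⟩ l = _
        rw [LcompA, if_neg (by simp; omega)]
      · intro b _ hb
        rw [ih (by omega) b, if_neg, zero_mul]
        intro hc
        exact hb (Fin.ext hc)
      · intro hc
        exact absurd (Finset.mem_univ _) hc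

lemma Ematrix_rel (u : Fin k → ℂ) (j : ℕ) (hj1 : 1 ≤ j) (hj2 : j ≤ k - 1) :
    Ematrix k (Pi.single (⟨j - 1, by omega⟩ : Fin k) (1 : ℂ)) =
      ((-1 : ℂ) ^ (k + j)) •
        (Ematrix k (Pi.single (⟨k - 1, by omega⟩ : Fin k) (1 : ℂ)) * LcompA k u ^ (k - j)) := by
  have hk : 2 ≤ k := by omega
  ext i l
  simp only [Matrix.smul_apply, Matrix.mul_apply, smul_eq_mul]
  by_cases hi : (i : ℕ) = k - 1
  · rw [Ematrix, if_pos hi]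
    have hsum : ∑ m : Fin k,
        Ematrix k (Pi.single (⟨k - 1, by omega⟩ : Fin k) (1 : ℂ)) i m *
          (LcompA k u ^ (k - j)) m l
        = (-1 : ℂ) ^ (k - 1) * (if (l : ℕ) = k - j then 1 else 0) := by
      rw [Finset.sum_eq_single (⟨0, by omega⟩ : Fin k)]
      · have h0 : (LcompA k u ^ (k - j)) ⟨0, by omega⟩ l = if (l : ℕ) = k - j then 1 else 0 :=
          row0 u (by omega) (k - j) (by omega) l
        rw [h0]
        have hfac : Ematrix k (Pi.single (⟨k - 1, by omega⟩ : Fin k) (1 : ℂ)) i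
            (⟨0, by omega⟩ : Fin k) = (-1 : ℂ) ^ (k - 1) := by
          rw [Ematrix, if_pos hi]
          show (-1 : ℂ) ^ (k - 1) *
            (Pi.single (⟨k - 1, by omega⟩ : Fin k) (1 : ℂ) : Fin k → ℂ) ⟨k - 1, by omega⟩
            = (-1 : ℂ) ^ (k - 1)
          rw [show (Pi.single (⟨k - 1, by omega⟩ : Fin k) (1 : ℂ) : Fin k → ℂ)
            (⟨k - 1, by omega⟩ : Fin k) = 1 by simp, mul_one]
        rw [hfac]
      · intro b _ hb
        rw [Ematrix, if_pos hi]
        rw [Pi.single_apply, if_neg, mul_zero, zero_mul]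
        intro hc
        have : k - 1 - (b : ℕ) = k - 1 := congrArg Fin.val hc
        have hb0 : (b : ℕ) = 0 := by have := b.isLt; omega
        exact hb (Fin.ext hb0)
      · intro hc
        exact absurd (Finset.mem_univ _) hc
    rw [hsum]
    have hlk := l.isLt
    by_cases hl : (l : ℕ) = k - j
    · rw [Pi.single_apply,
        if_pos (show (⟨k - 1 - (l : ℕ), by omega⟩ : Fin k) = ⟨j - 1, by omega⟩ by
          rw [Fin.mk_eq_mk]; omega)]
      rw [if_pos hl, mul_one, mul_one]
      rw [show k - 1 - (l : ℕ) = j - 1 by omega]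
      rw [← pow_add]
      exact neg_one_pow_eq _ _ (by omega)
    · rw [Pi.single_apply, if_neg, if_neg hl, mul_zero, mul_zero, mul_zero]
      intro hc
      have : k - 1 - (l : ℕ) = j - 1 := congrArg Fin.val hc
      omega
  · rw [Ematrix, if_neg hi]
    have hz : ∀ m : Fin k,
        Ematrix k (Pi.single (⟨k - 1, by omega⟩ : Fin k) (1 : ℂ)) i m *
          (LcompA k u ^ (k - j)) m l = 0 := by
      intro m
      rw [Ematrix, if_neg hi, zero_mul]
    rw [Finset.sum_congr rfl (fun m _ => hz m), Finset.sum_const_zero, mul_zero]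

lemma csmul_mul (c : ℂ) (x y : (Fin k → ℂ) →L[ℂ] (Fin k → ℂ)) :
    (c • x) * y = c • (x * y) := by
  ext v i
  simp [ContinuousLinearMap.mul_apply]

lemma mul_csmul (c : ℂ) (x y : (Fin k → ℂ) →L[ℂ] (Fin k → ℂ)) :
    x * (c • y) = c • (x * y) := by
  ext v i
  simp [ContinuousLinearMap.mul_apply]

lemma Dpow_rel (t : Fin k → ℂ) (j : ℕ) (hj1 : 1 ≤ j) (hj2 : j ≤ k - 1) (m : ℕ) :
    Dpow t m (Pi.single (⟨j - 1, by omega⟩ : Fin k) (1 : ℂ)) =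
      ((-1 : ℂ) ^ (k + j)) •
        (Dpow t m (Pi.single (⟨k - 1, by omega⟩ : Fin k) (1 : ℂ)) * (tc (LcompA k t)) ^ (k - j)) := by
  have hA : AhatL k (Pi.single (⟨j - 1, by omega⟩ : Fin k) (1 : ℂ)) =
      ((-1 : ℂ) ^ (k + j)) •
        (AhatL k (Pi.single (⟨k - 1, by omega⟩ : Fin k) (1 : ℂ)) * (tc (LcompA k t)) ^ (k - j)) := by
    rw [AhatL_apply, AhatL_apply, Ematrix_rel t j hj1 hj2, tc_smul, tc_mul, tc_pow]
  induction m with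
  | zero => simp [Dpow]
  | succ m ih =>
      rw [Dpow_succ_apply, Dpow_succ_apply, ih, hA]
      rw [csmul_mul, mul_csmul,
        ← smul_add ((-1 : ℂ) ^ (k + j))
          ((Dpow t m) (Pi.single (⟨k - 1, by omega⟩ : Fin k) (1 : ℂ)) *
            tc (LcompA k t) ^ (k - j) * tc (LcompA k t))
          (tc (LcompA k t) ^ m *
            ((AhatL k) (Pi.single (⟨k - 1, by omega⟩ : Fin k) (1 : ℂ)) *
              tc (LcompA k t) ^ (k - j)))]
      congr 1
      rw [add_mul, mul_assoc _ _ (tc (LcompA k t)), pow_mul_comm' (tc (LcompA k t)) (k - j),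
        ← mul_assoc, ← mul_assoc]

lemma pow_apply_eq (u : Fin k → ℂ) (m : ℕ) (v : Fin k → ℂ) :
    (tc (LcompA k u) ^ m) v = (LcompA k u ^ m) *ᵥ v := by
  rw [← tc_pow, tc_apply]

variable {Φ : (Fin k → ℂ) → Fin k → ℂ}

lemma hasFDerivAt_Fm (hΦ : Differentiable ℂ Φ) (m : ℕ) (t : Fin k → ℂ) :
    HasFDerivAt (fun u => (LcompA k u ^ m) *ᵥ Φ u)
      ((tc (LcompA k t) ^ m).comp (fderiv ℂ Φ t) + (Dpow t m).flip (Φ t)) t := by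
  have he : (fun u => (LcompA k u ^ m) *ᵥ Φ u) = fun u => ((tc (LcompA k u)) ^ m) (Φ u) := by
    funext u; rw [pow_apply_eq]
  rw [he]
  exact (hasFDerivAt_pow t m).clm_apply (hΦ t).hasFDerivAt

lemma diff_Fm (hΦ : Differentiable ℂ Φ) (m : ℕ) :
    Differentiable ℂ (fun u => (LcompA k u ^ m) *ᵥ Φ u) :=
  fun t => (hasFDerivAt_Fm hΦ m t).differentiableAt

lemma fderiv_Fm_apply (hΦ : Differentiable ℂ Φ) (m : ℕ) (t w : Fin k → ℂ) :
    fderiv ℂ (fun u => (LcompA k u ^ m) *ᵥ Φ u) t w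
      = (tc (LcompA k t) ^ m) (fderiv ℂ Φ t w) + (Dpow t m w) (Φ t) := by
  rw [(hasFDerivAt_Fm hΦ m t).fderiv]
  simp [ContinuousLinearMap.add_apply, ContinuousLinearMap.flip_apply]

lemma pointwise (hΦdiff : Differentiable ℂ Φ) (hΦsol : ∀ s : Fin k → ℂ, SatA k Φ s)
    (h j : ℕ) (h1 : 1 ≤ h) (h2 : h ≤ k - 1) (j1 : 1 ≤ j) (j2 : j ≤ k - 1) (t : Fin k → ℂ) :
    fderiv ℂ (fun u => (LcompA k u ^ (k - h)) *ᵥ Φ u) t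
        (Pi.single (⟨j - 1, by omega⟩ : Fin k) (1 : ℂ))
      = ((-1 : ℂ) ^ (k + j)) •
        fderiv ℂ (fun u => (LcompA k u ^ (2 * k - h - j)) *ᵥ Φ u) t
          (Pi.single (⟨k - 1, by omega⟩ : Fin k) (1 : ℂ)) := by
  have hk2 : 2 ≤ k := by omega
  have hΦj : fderiv ℂ Φ t (Pi.single (⟨j - 1, by omega⟩ : Fin k) (1 : ℂ))
      = ((-1 : ℂ) ^ (k + j)) • fderiv ℂ (fun u => (LcompA k u ^ (k - j)) *ᵥ Φ u) t
          (Pi.single (⟨k - 1, by omega⟩ : Fin k) (1 : ℂ)) := by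
    have hs := hΦsol t j j1 j2
    rw [← hs, smul_smul, ← pow_add, Even.neg_one_pow ⟨k + j, rfl⟩, one_smul]
  have hsplit : (fun u => (LcompA k u ^ (2 * k - h - j)) *ᵥ Φ u)
      = fun u => ((tc (LcompA k u)) ^ (k - h)) ((LcompA k u ^ (k - j)) *ᵥ Φ u) := by
    funext u
    rw [show 2 * k - h - j = (k - h) + (k - j) by omega, pow_apply_eq, Matrix.mulVec_mulVec,
      ← pow_add]
  have hRder : fderiv ℂ (fun u => (LcompA k u ^ (2 * k - h - j)) *ᵥ Φ u) t
        (Pi.single (⟨k - 1, by omega⟩ : Fin k) (1 : ℂ))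
      = (tc (LcompA k t) ^ (k - h))
          (fderiv ℂ (fun u => (LcompA k u ^ (k - j)) *ᵥ Φ u) t
            (Pi.single (⟨k - 1, by omega⟩ : Fin k) (1 : ℂ)))
        + (Dpow t (k - h) (Pi.single (⟨k - 1, by omega⟩ : Fin k) (1 : ℂ)))
            ((LcompA k t ^ (k - j)) *ᵥ Φ t) := by
    rw [hsplit,
      ((hasFDerivAt_pow t (k - h)).clm_apply (hasFDerivAt_Fm hΦdiff (k - j) t)).fderiv,
      fderiv_Fm_apply hΦdiff (k - j) t]
    simp [ContinuousLinearMap.add_apply, ContinuousLinearMap.flip_apply]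
  rw [fderiv_Fm_apply hΦdiff (k - h) t, hRder, hΦj, Dpow_rel t j j1 j2 (k - h)]
  rw [(tc (LcompA k t) ^ (k - h)).map_smul, ContinuousLinearMap.smul_apply,
    ContinuousLinearMap.mul_apply, pow_apply_eq, pow_apply_eq, smul_add]
end SysInt


/-- integrability of the system (@): for a holomorphic solution `Φ` of (@),
`(−1)^{h+j} ∂²Φ/(∂s_j ∂s_h) = ∂²(A(s)^{2k−h−j} Φ)/∂s_k²` for all `h, j ∈ {1, …, k−1}`;
in particular the mixed second derivatives depend only on `h + j` and are symmetric. -/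
theorem system_integrable
    (k : ℕ) (hk : 2 ≤ k) (Φ : (Fin k → ℂ) → Fin k → ℂ)
    (hΦdiff : Differentiable ℂ Φ) (hΦsol : ∀ s : Fin k → ℂ, SatA k Φ s) :
    ∀ (s : Fin k → ℂ) (h j : ℕ), ∀ _h1 : 1 ≤ h, ∀ _h2 : h ≤ k - 1,
      ∀ _j1 : 1 ≤ j, ∀ _j2 : j ≤ k - 1,
      ((-1 : ℂ) ^ (h + j)) •
          fderiv ℂ (fun t => fderiv ℂ Φ t (Pi.single (⟨h - 1, by omega⟩ : Fin k) (1 : ℂ)))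
            s (Pi.single (⟨j - 1, by omega⟩ : Fin k) (1 : ℂ))
        = fderiv ℂ
            (fun t => fderiv ℂ (fun u => (LcompA k u ^ (2 * k - h - j)) *ᵥ Φ u) t
              (Pi.single (⟨k - 1, by omega⟩ : Fin k) (1 : ℂ)))
            s (Pi.single (⟨k - 1, by omega⟩ : Fin k) (1 : ℂ)) := by
  intro s h j h1 h2 j1 j2
  have hFh_diff : Differentiable ℂ (fun u => (LcompA k u ^ (k - h)) *ᵥ Φ u) :=
    SysInt.diff_Fm hΦdiff (k - h)
  have hF2_diff : Differentiable ℂ (fun u => (LcompA k u ^ (2 * k - h - j)) *ᵥ Φ u) :=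
    SysInt.diff_Fm hΦdiff (2 * k - h - j)
  have e1 : (fun t => fderiv ℂ Φ t (Pi.single (⟨h - 1, by omega⟩ : Fin k) (1 : ℂ)))
      = fun t => ((-1 : ℂ) ^ (k + h)) •
          fderiv ℂ (fun u => (LcompA k u ^ (k - h)) *ᵥ Φ u) t
            (Pi.single (⟨k - 1, by omega⟩ : Fin k) (1 : ℂ)) := by
    funext t
    have hs := hΦsol t h h1 h2
    rw [← hs, smul_smul, ← pow_add, Even.neg_one_pow ⟨k + h, rfl⟩, one_smul]
  have g1_diff : Differentiable ℂ (fun t =>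
      fderiv ℂ (fun u => (LcompA k u ^ (k - h)) *ᵥ Φ u) t
        (Pi.single (⟨k - 1, by omega⟩ : Fin k) (1 : ℂ))) :=
    SysInt.diff_fderiv_apply hFh_diff _
  have g2_diff : Differentiable ℂ (fun t =>
      fderiv ℂ (fun u => (LcompA k u ^ (2 * k - h - j)) *ᵥ Φ u) t
        (Pi.single (⟨k - 1, by omega⟩ : Fin k) (1 : ℂ))) :=
    SysInt.diff_fderiv_apply hF2_diff _
  have e2 : (fun t => fderiv ℂ (fun u => (LcompA k u ^ (k - h)) *ᵥ Φ u) t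
        (Pi.single (⟨j - 1, by omega⟩ : Fin k) (1 : ℂ)))
      = fun t => ((-1 : ℂ) ^ (k + j)) •
          fderiv ℂ (fun u => (LcompA k u ^ (2 * k - h - j)) *ᵥ Φ u) t
            (Pi.single (⟨k - 1, by omega⟩ : Fin k) (1 : ℂ)) :=
    funext fun t => SysInt.pointwise hΦdiff hΦsol h j h1 h2 j1 j2 t
  rw [e1, fderiv_fun_const_smul (g1_diff s), ContinuousLinearMap.smul_apply, smul_smul]
  rw [SysInt.second_symm hFh_diff s
    (Pi.single (⟨k - 1, by omega⟩ : Fin k) (1 : ℂ))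
    (Pi.single (⟨j - 1, by omega⟩ : Fin k) (1 : ℂ))]
  rw [e2, fderiv_fun_const_smul (g2_diff s), ContinuousLinearMap.smul_apply, smul_smul]
  rw [show ((-1 : ℂ) ^ (h + j) * (-1 : ℂ) ^ (k + h) * (-1 : ℂ) ^ (k + j)) = 1 by
    rw [← pow_add, ← pow_add]
    exact Even.neg_one_pow ⟨h + j + k, by ring⟩]
  rw [one_smul]
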